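/- arXiv:1202.5688 — 3 statements merged into one kernel-verified Lean document; each statement's English description precedes it below -/
import Mathlib

section
/- Under the hypothesis that Φ_i^T P_j Φ_i - P_i is negative definite for all i, j in a finite set Λ, with each P_i positive definite, every trajectory of the switched system Γ(k+1) = Φ_{σ(k)} Γ(k) converges to zero as k → ∞, for any switching signal σ : ℕ → Λ. -/
open Matrix Filter

section Aux

variable {n : ℕ}

private lemma quad_smul (M : Matrix (Fin n) (Fin n) ℝ) (r : ℝ) (x : Fin n → ℝ) :
    (r • x) ⬝ᵥ M *ᵥ (r • x) = r ^ 2 * (x ⬝ᵥ M *ᵥ x) := by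
  rw [Matrix.mulVec_smul, smul_dotProduct, dotProduct_smul]
  simp [smul_eq_mul]; ring

private lemma quad_continuous (M : Matrix (Fin n) (Fin n) ℝ) :
    Continuous (fun x : EuclideanSpace ℝ (Fin n) =>
      (x : Fin n → ℝ) ⬝ᵥ M *ᵥ (x : Fin n → ℝ)) := by
  have h1 : Continuous (fun x : Fin n → ℝ => x ⬝ᵥ M *ᵥ x) :=
    continuous_id.dotProduct (continuous_const.matrix_mulVec continuous_id)
  exact h1.comp (PiLp.continuous_ofLp 2 (fun _ : Fin n => ℝ))

private lemma exists_lower (hn : 0 < n) (M : Matrix (Fin n) (Fin n) ℝ)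
    (hM : ∀ x : Fin n → ℝ, x ≠ 0 → 0 < x ⬝ᵥ M *ᵥ x) :
    ∃ c > 0, ∀ x : EuclideanSpace ℝ (Fin n),
      c * ‖x‖ ^ 2 ≤ (x : Fin n → ℝ) ⬝ᵥ M *ᵥ (x : Fin n → ℝ) := by
  have hne : (Metric.sphere (0 : EuclideanSpace ℝ (Fin n)) 1).Nonempty := by
    refine ⟨EuclideanSpace.single ⟨0, hn⟩ (1 : ℝ), ?_⟩
    simp [mem_sphere_iff_norm, EuclideanSpace.norm_single]
  obtain ⟨x0, hx0mem, hx0min⟩ :=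
    (isCompact_sphere (0 : EuclideanSpace ℝ (Fin n)) 1).exists_isMinOn hne
      (quad_continuous M).continuousOn
  have hx0norm : ‖x0‖ = 1 := mem_sphere_zero_iff_norm.mp hx0mem
  have hx0ne : (x0 : Fin n → ℝ) ≠ 0 := by
    intro h
    rw [show x0 = 0 from by ext i; exact congrFun h i] at hx0norm
    simp at hx0norm
  refine ⟨_, hM x0 hx0ne, fun x => ?_⟩
  rcases eq_or_ne x 0 with rfl | hx
  · simp
  · have hxn : (0 : ℝ) < ‖x‖ := norm_pos_iff.mpr hx
    set u : EuclideanSpace ℝ (Fin n) := ‖x‖⁻¹ • x with hu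
    have hunorm : ‖u‖ = 1 := by
      rw [hu, norm_smul, norm_inv, norm_norm, inv_mul_cancel₀ hxn.ne']
    have humem : u ∈ Metric.sphere (0 : EuclideanSpace ℝ (Fin n)) 1 :=
      mem_sphere_zero_iff_norm.mpr hunorm
    have hxu : x = ‖x‖ • u := by
      rw [hu, smul_smul, mul_inv_cancel₀ hxn.ne', one_smul]
    have key : (x : Fin n → ℝ) ⬝ᵥ M *ᵥ (x : Fin n → ℝ)
        = ‖x‖ ^ 2 * ((u : Fin n → ℝ) ⬝ᵥ M *ᵥ (u : Fin n → ℝ)) := by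
      conv_lhs => rw [hxu]
      exact quad_smul M ‖x‖ u
    rw [key, mul_comm ((x0 : Fin n → ℝ) ⬝ᵥ M *ᵥ x0) (‖x‖ ^ 2)]
    exact mul_le_mul_of_nonneg_left (hx0min humem) (sq_nonneg _)

private lemma exists_upper (hn : 0 < n) (M : Matrix (Fin n) (Fin n) ℝ)
    (hM : ∀ x : Fin n → ℝ, x ≠ 0 → 0 < x ⬝ᵥ M *ᵥ x) :
    ∃ C > 0, ∀ x : EuclideanSpace ℝ (Fin n),
      (x : Fin n → ℝ) ⬝ᵥ M *ᵥ (x : Fin n → ℝ) ≤ C * ‖x‖ ^ 2 := by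
  have hne : (Metric.sphere (0 : EuclideanSpace ℝ (Fin n)) 1).Nonempty := by
    refine ⟨EuclideanSpace.single ⟨0, hn⟩ (1 : ℝ), ?_⟩
    simp [mem_sphere_iff_norm, EuclideanSpace.norm_single]
  obtain ⟨x0, hx0mem, hx0max⟩ :=
    (isCompact_sphere (0 : EuclideanSpace ℝ (Fin n)) 1).exists_isMaxOn hne
      (quad_continuous M).continuousOn
  have hx0norm : ‖x0‖ = 1 := mem_sphere_zero_iff_norm.mp hx0mem
  have hx0ne : (x0 : Fin n → ℝ) ≠ 0 := by
    intro h
    rw [show x0 = 0 from by ext i; exact congrFun h i] at hx0norm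
    simp at hx0norm
  refine ⟨_, hM x0 hx0ne, fun x => ?_⟩
  rcases eq_or_ne x 0 with rfl | hx
  · simp
  · have hxn : (0 : ℝ) < ‖x‖ := norm_pos_iff.mpr hx
    set u : EuclideanSpace ℝ (Fin n) := ‖x‖⁻¹ • x with hu
    have hunorm : ‖u‖ = 1 := by
      rw [hu, norm_smul, norm_inv, norm_norm, inv_mul_cancel₀ hxn.ne']
    have humem : u ∈ Metric.sphere (0 : EuclideanSpace ℝ (Fin n)) 1 :=
      mem_sphere_zero_iff_norm.mpr hunorm
    have hxu : x = ‖x‖ • u := by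
      rw [hu, smul_smul, mul_inv_cancel₀ hxn.ne', one_smul]
    have key : (x : Fin n → ℝ) ⬝ᵥ M *ᵥ (x : Fin n → ℝ)
        = ‖x‖ ^ 2 * ((u : Fin n → ℝ) ⬝ᵥ M *ᵥ (u : Fin n → ℝ)) := by
      conv_lhs => rw [hxu]
      exact quad_smul M ‖x‖ u
    rw [key, mul_comm ((x0 : Fin n → ℝ) ⬝ᵥ M *ᵥ x0) (‖x‖ ^ 2)]
    exact mul_le_mul_of_nonneg_left (hx0max humem) (sq_nonneg _)

private lemma key_contraction (hn : 0 < n) (A B : Matrix (Fin n) (Fin n) ℝ)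
    (hA : ∀ x : Fin n → ℝ, x ≠ 0 → 0 < x ⬝ᵥ A *ᵥ x)
    (hBA : ∀ x : Fin n → ℝ, x ≠ 0 → x ⬝ᵥ B *ᵥ x < x ⬝ᵥ A *ᵥ x) :
    ∃ ρ : ℝ, 0 ≤ ρ ∧ ρ < 1 ∧ ∀ x : EuclideanSpace ℝ (Fin n),
      (x : Fin n → ℝ) ⬝ᵥ B *ᵥ (x : Fin n → ℝ) ≤ ρ * ((x : Fin n → ℝ) ⬝ᵥ A *ᵥ (x : Fin n → ℝ)) := by
  have hMpos : ∀ x : Fin n → ℝ, x ≠ 0 → 0 < x ⬝ᵥ (A - B) *ᵥ x := by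
    intro x hx
    rw [Matrix.sub_mulVec, dotProduct_sub]
    exact sub_pos.mpr (hBA x hx)
  obtain ⟨c, hc, hclow⟩ := exists_lower hn (A - B) hMpos
  obtain ⟨C, hC, hChigh⟩ := exists_upper hn A hA
  refine ⟨max 0 (1 - c / C), le_max_left _ _, ?_, ?_⟩
  · rw [max_lt_iff]
    constructor
    · norm_num
    · have : 0 < c / C := div_pos hc hC
      linarith
  · intro x
    have hAx : 0 ≤ (x : Fin n → ℝ) ⬝ᵥ A *ᵥ (x : Fin n → ℝ) := by
      rcases eq_or_ne x 0 with rfl | hx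
      · simp
      · exact (hA x (fun h => hx (by ext i; exact congrFun h i))).le
    have h1 : (x : Fin n → ℝ) ⬝ᵥ B *ᵥ (x : Fin n → ℝ)
        = (x : Fin n → ℝ) ⬝ᵥ A *ᵥ (x : Fin n → ℝ)
          - (x : Fin n → ℝ) ⬝ᵥ (A - B) *ᵥ (x : Fin n → ℝ) := by
      rw [Matrix.sub_mulVec, dotProduct_sub]; ring
    have h2 : (c / C) * ((x : Fin n → ℝ) ⬝ᵥ A *ᵥ (x : Fin n → ℝ)) ≤ c * ‖x‖ ^ 2 := by
      have := mul_le_mul_of_nonneg_left (hChigh x) (le_of_lt (div_pos hc hC))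
      calc (c / C) * ((x : Fin n → ℝ) ⬝ᵥ A *ᵥ (x : Fin n → ℝ))
          ≤ (c / C) * (C * ‖x‖ ^ 2) := this
        _ = c * ‖x‖ ^ 2 := by field_simp
    have h3 : (x : Fin n → ℝ) ⬝ᵥ B *ᵥ (x : Fin n → ℝ)
        ≤ (1 - c / C) * ((x : Fin n → ℝ) ⬝ᵥ A *ᵥ (x : Fin n → ℝ)) := by
      rw [h1]
      have := hclow x
      nlinarith
    calc (x : Fin n → ℝ) ⬝ᵥ B *ᵥ (x : Fin n → ℝ)
        ≤ (1 - c / C) * ((x : Fin n → ℝ) ⬝ᵥ A *ᵥ (x : Fin n → ℝ)) := h3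
      _ ≤ max 0 (1 - c / C) * ((x : Fin n → ℝ) ⬝ᵥ A *ᵥ (x : Fin n → ℝ)) :=
          mul_le_mul_of_nonneg_right (le_max_right _ _) hAx

private lemma conj_quad (A B : Matrix (Fin n) (Fin n) ℝ) (x : Fin n → ℝ) :
    (A *ᵥ x) ⬝ᵥ B *ᵥ (A *ᵥ x) = x ⬝ᵥ (Aᵀ * B * A) *ᵥ x := by
  rw [show (Aᵀ * B * A) *ᵥ x = Aᵀ *ᵥ (B *ᵥ (A *ᵥ x)) by
    rw [Matrix.mulVec_mulVec, Matrix.mulVec_mulVec]]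
  rw [Matrix.dotProduct_mulVec x Aᵀ, Matrix.vecMul_transpose]

end Aux

theorem switched_system_asymptotic_stability
    {n : ℕ} {Λ : Type*} [Fintype Λ] [Nonempty Λ]
    (Φ : Λ → Matrix (Fin n) (Fin n) ℝ)
    (P : Λ → Matrix (Fin n) (Fin n) ℝ)
    (hP : ∀ i, (P i).PosDef)
    (hLMI : ∀ i j, ∀ x : Fin n → ℝ, x ≠ 0 →
      x ⬝ᵥ ((Φ i)ᵀ * P j * Φ i - P i) *ᵥ x < 0)
    (σ : ℕ → Λ) (Γ : ℕ → EuclideanSpace ℝ (Fin n))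
    (hΓ : ∀ k, Γ (k + 1) = Φ (σ k) *ᵥ Γ k) :
    Tendsto (fun k => ‖Γ k‖) atTop (nhds 0) := by
  rcases Nat.eq_zero_or_pos n with rfl | hn
  · have hz : ∀ k, Γ k = 0 := fun k => by ext i; exact i.elim0
    simp only [hz, norm_zero]
    exact tendsto_const_nhds
  -- positivity of the quadratic forms of P i
  have hPpos : ∀ i, ∀ x : Fin n → ℝ, x ≠ 0 → 0 < x ⬝ᵥ (P i) *ᵥ x := by
    intro i x hx
    have := (hP i).dotProduct_mulVec_pos hx
    simpa using this
  -- contraction constants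
  have hkey : ∀ p : Λ × Λ, ∃ ρ : ℝ, 0 ≤ ρ ∧ ρ < 1 ∧ ∀ x : EuclideanSpace ℝ (Fin n),
      (x : Fin n → ℝ) ⬝ᵥ ((Φ p.1)ᵀ * P p.2 * Φ p.1) *ᵥ (x : Fin n → ℝ)
        ≤ ρ * ((x : Fin n → ℝ) ⬝ᵥ (P p.1) *ᵥ (x : Fin n → ℝ)) := by
    rintro ⟨i, j⟩
    refine key_contraction hn (P i) ((Φ i)ᵀ * P j * Φ i) (hPpos i) ?_
    intro x hx
    have := hLMI i j x hx
    rw [Matrix.sub_mulVec, dotProduct_sub] at this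
    linarith
  choose ρ hρ0 hρ1 hρle using hkey
  -- lower constants for P i
  have hlow : ∀ i, ∃ c > 0, ∀ x : EuclideanSpace ℝ (Fin n),
      c * ‖x‖ ^ 2 ≤ (x : Fin n → ℝ) ⬝ᵥ (P i) *ᵥ (x : Fin n → ℝ) :=
    fun i => exists_lower hn (P i) (hPpos i)
  choose c hc0 hclow using hlow
  -- global constants
  have hΛ : (Finset.univ : Finset (Λ × Λ)).Nonempty := Finset.univ_nonempty
  have hΛ1 : (Finset.univ : Finset Λ).Nonempty := Finset.univ_nonempty
  set ρm : ℝ := Finset.univ.sup' hΛ ρ with hρm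
  have hρm0 : 0 ≤ ρm := le_trans (hρ0 (Classical.arbitrary _))
    (Finset.le_sup' ρ (Finset.mem_univ _))
  have hρm1 : ρm < 1 := by
    rw [hρm, Finset.sup'_lt_iff]
    exact fun p _ => hρ1 p
  have hρmle : ∀ p : Λ × Λ, ρ p ≤ ρm := fun p => Finset.le_sup' ρ (Finset.mem_univ p)
  set cm : ℝ := Finset.univ.inf' hΛ1 c with hcm
  have hcm0 : 0 < cm := by
    rw [hcm, Finset.lt_inf'_iff]
    exact fun i _ => hc0 i
  have hcmle : ∀ i, cm ≤ c i := fun i => Finset.inf'_le c (Finset.mem_univ i)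
  -- the Lyapunov function
  set V : ℕ → ℝ := fun k => (Γ k : Fin n → ℝ) ⬝ᵥ (P (σ k)) *ᵥ (Γ k : Fin n → ℝ) with hV
  have hVnonneg : ∀ k, 0 ≤ V k := by
    intro k
    rcases eq_or_ne (Γ k) 0 with h | h
    · simp [hV, h]
    · exact (hPpos (σ k) (Γ k) (fun hh => h (by ext i; exact congrFun hh i))).le
  have hVstep : ∀ k, V (k + 1) ≤ ρm * V k := by
    intro k
    have h1 : V (k + 1)
        = (Γ k : Fin n → ℝ) ⬝ᵥ ((Φ (σ k))ᵀ * P (σ (k + 1)) * Φ (σ k)) *ᵥ (Γ k : Fin n → ℝ) := by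
      rw [hV]
      simp only [hΓ k]
      exact conj_quad (Φ (σ k)) (P (σ (k + 1))) (Γ k)
    rw [h1]
    calc (Γ k : Fin n → ℝ) ⬝ᵥ ((Φ (σ k))ᵀ * P (σ (k + 1)) * Φ (σ k)) *ᵥ (Γ k : Fin n → ℝ)
        ≤ ρ (σ k, σ (k + 1)) * V k := hρle (σ k, σ (k + 1)) (Γ k)
      _ ≤ ρm * V k := mul_le_mul_of_nonneg_right (hρmle _) (hVnonneg k)
  have hVbound : ∀ k, V k ≤ ρm ^ k * V 0 := by
    intro k
    induction k with
    | zero => simp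
    | succ k ih =>
      calc V (k + 1) ≤ ρm * V k := hVstep k
        _ ≤ ρm * (ρm ^ k * V 0) := mul_le_mul_of_nonneg_left ih hρm0
        _ = ρm ^ (k + 1) * V 0 := by ring
  have hnormbound : ∀ k, ‖Γ k‖ ^ 2 ≤ (V 0 / cm) * ρm ^ k := by
    intro k
    have h1 : cm * ‖Γ k‖ ^ 2 ≤ V k :=
      le_trans (mul_le_mul_of_nonneg_right (hcmle (σ k)) (sq_nonneg _)) (hclow (σ k) (Γ k))
    have h2 : cm * ‖Γ k‖ ^ 2 ≤ ρm ^ k * V 0 := le_trans h1 (hVbound k)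
    rw [div_mul_eq_mul_div, le_div_iff₀ hcm0, mul_comm]
    linarith
  have hsq : Tendsto (fun k => ‖Γ k‖ ^ 2) atTop (nhds 0) := by
    have hgeo : Tendsto (fun k => (V 0 / cm) * ρm ^ k) atTop (nhds 0) := by
      have := (tendsto_pow_atTop_nhds_zero_of_lt_one hρm0 hρm1).const_mul (V 0 / cm)
      simpa using this
    exact squeeze_zero (fun k => sq_nonneg _) hnormbound hgeo
  have := (Real.continuous_sqrt.tendsto 0).comp hsq
  simp only [Function.comp_def, Real.sqrt_zero] at this
  convert this using 2 with k
  exact (Real.sqrt_sq (norm_nonneg _)).symm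
end

section
/- Suppose Φ_i^T P_j Φ_i ≺ P_i (in the Loewner order, i.e., P_i - Φ_i^T P_j Φ_i is positive definite) for all i, j in a finite set Λ, with each P_i positive definite. Then each matrix Φ_i is Schur stable: Φ_i^k → 0 as k → ∞. -/
open Matrix Filter

private lemma quad_lower_bound {n : ℕ} {M : Matrix (Fin n) (Fin n) ℝ} (hM : M.PosDef) :
    ∃ c > 0, ∀ x : Fin n → ℝ, c * ‖x‖ ^ 2 ≤ x ⬝ᵥ M *ᵥ x := by
  have hq : ∀ x : Fin n → ℝ, x ≠ 0 → 0 < x ⬝ᵥ M *ᵥ x := by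
    intro x hx
    simpa using hM.dotProduct_mulVec_pos hx
  have hcont : Continuous (fun x : Fin n → ℝ => x ⬝ᵥ M *ᵥ x) :=
    Continuous.dotProduct continuous_id (continuous_const.matrix_mulVec continuous_id)
  rcases isEmpty_or_nonempty (Fin n) with h | h
  · refine ⟨1, one_pos, fun x => ?_⟩
    have hx : x = 0 := Subsingleton.elim _ _
    simp [hx]
  · have hsph : (Metric.sphere (0 : Fin n → ℝ) 1).Nonempty := by
      haveI : Nontrivial (Fin n → ℝ) := by
        obtain ⟨i⟩ := h
        exact ⟨Pi.single i 1, 0, by simp [Pi.single_eq_same, funext_iff]; exact ⟨i, by simp⟩⟩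
      exact NormedSpace.sphere_nonempty.mpr zero_le_one
    obtain ⟨y, hy, hmin⟩ :=
      (isCompact_sphere (0 : Fin n → ℝ) 1).exists_isMinOn hsph hcont.continuousOn
    have hyn : ‖y‖ = 1 := by simpa using hy
    have hy0 : y ≠ 0 := by intro h0; rw [h0] at hyn; simp at hyn
    refine ⟨y ⬝ᵥ M *ᵥ y, hq y hy0, fun x => ?_⟩
    by_cases hx : x = 0
    · simp [hx]
    · have hxn : ‖x‖ ≠ 0 := norm_ne_zero_iff.mpr hx
      set z := ‖x‖⁻¹ • x with hz
      have hzs : z ∈ Metric.sphere (0 : Fin n → ℝ) 1 := by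
        simp [hz, norm_smul, abs_of_nonneg (inv_nonneg.mpr (norm_nonneg x)),
          inv_mul_cancel₀ hxn]
      have hle : (y ⬝ᵥ M *ᵥ y) ≤ z ⬝ᵥ M *ᵥ z := hmin hzs
      have hzq : z ⬝ᵥ M *ᵥ z = (‖x‖⁻¹) ^ 2 * (x ⬝ᵥ M *ᵥ x) := by
        simp only [hz, smul_mulVec, mulVec_smul, dotProduct_smul, smul_dotProduct, smul_eq_mul, sq]
        ring
      rw [hzq] at hle
      have h2 : (y ⬝ᵥ M *ᵥ y) * ‖x‖ ^ 2 ≤ (‖x‖⁻¹) ^ 2 * (x ⬝ᵥ M *ᵥ x) * ‖x‖ ^ 2 := by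
        exact mul_le_mul_of_nonneg_right hle (by positivity)
      calc y ⬝ᵥ M *ᵥ y * ‖x‖ ^ 2 ≤ (‖x‖⁻¹) ^ 2 * (x ⬝ᵥ M *ᵥ x) * ‖x‖ ^ 2 := h2
        _ = x ⬝ᵥ M *ᵥ x := by
            field_simp

private lemma quad_upper_bound {n : ℕ} (M : Matrix (Fin n) (Fin n) ℝ) :
    ∃ C > 0, ∀ x : Fin n → ℝ, x ⬝ᵥ M *ᵥ x ≤ C * ‖x‖ ^ 2 := by
  refine ⟨(∑ a, ∑ b, |M a b|) + 1, by positivity, fun x => ?_⟩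
  have h1 : x ⬝ᵥ M *ᵥ x ≤ |x ⬝ᵥ M *ᵥ x| := le_abs_self _
  have h2 : |x ⬝ᵥ M *ᵥ x| ≤ ∑ a, ∑ b, |M a b| * ‖x‖ ^ 2 := by
    rw [dotProduct]
    refine (Finset.abs_sum_le_sum_abs _ _).trans (Finset.sum_le_sum fun a _ => ?_)
    rw [mulVec, dotProduct, Finset.mul_sum]
    refine (Finset.abs_sum_le_sum_abs _ _).trans (Finset.sum_le_sum fun b _ => ?_)
    rw [abs_mul, abs_mul, sq]
    have hxa : |x a| ≤ ‖x‖ := by simpa using norm_le_pi_norm x a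
    have hxb : |x b| ≤ ‖x‖ := by simpa using norm_le_pi_norm x b
    calc |x a| * (|M a b| * |x b|) ≤ ‖x‖ * (|M a b| * ‖x‖) := by
          apply mul_le_mul hxa (mul_le_mul_of_nonneg_left hxb (abs_nonneg _)) (by positivity)
            (norm_nonneg _)
      _ = |M a b| * (‖x‖ * ‖x‖) := by ring
  refine h1.trans (h2.trans ?_)
  simp_rw [← Finset.sum_mul]
  nlinarith [sq_nonneg ‖x‖, Finset.sum_nonneg (fun a (_ : a ∈ Finset.univ) =>
      Finset.sum_nonneg fun b (_ : b ∈ Finset.univ) => abs_nonneg (M a b))]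

theorem lmi_implies_schur_stable
    {n : ℕ} {Λ : Type*} [Fintype Λ] [Nonempty Λ]
    (Φ : Λ → Matrix (Fin n) (Fin n) ℝ)
    (P : Λ → Matrix (Fin n) (Fin n) ℝ)
    (hP : ∀ i, (P i).PosDef)
    (hLMI : ∀ i j, (P i - (Φ i)ᵀ * P j * Φ i).PosDef) :
    ∀ i, Tendsto (fun k => Φ i ^ k) atTop (nhds 0) := by
  intro i
  set A := Φ i with hA
  set Q := P i with hQ
  -- quadratic form identities
  have key : ∀ x : Fin n → ℝ, x ⬝ᵥ ((A)ᵀ * Q * A) *ᵥ x = (A *ᵥ x) ⬝ᵥ Q *ᵥ (A *ᵥ x) := by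
    intro x
    rw [← mulVec_mulVec, ← mulVec_mulVec, dotProduct_mulVec x, vecMul_transpose,
]
  obtain ⟨ε, hε, hlow⟩ := quad_lower_bound (hLMI i i)
  obtain ⟨c, hc, hclow⟩ := quad_lower_bound (hP i)
  obtain ⟨C, hC, hCup⟩ := quad_upper_bound Q
  -- one-step contraction
  set ρ : ℝ := max (1 - ε / C) 0 with hρ
  have hρ0 : 0 ≤ ρ := le_max_right _ _
  have hρ1 : ρ < 1 := by
    rw [hρ, max_lt_iff]
    constructor
    · linarith [div_pos hε hC]
    · norm_num
  have qnonneg : ∀ x : Fin n → ℝ, 0 ≤ x ⬝ᵥ Q *ᵥ x := by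
    intro x
    simpa using (hP i).posSemidef.dotProduct_mulVec_nonneg x
  have step : ∀ x : Fin n → ℝ, (A *ᵥ x) ⬝ᵥ Q *ᵥ (A *ᵥ x) ≤ ρ * (x ⬝ᵥ Q *ᵥ x) := by
    intro x
    have h1 := hlow x
    rw [sub_mulVec, dotProduct_sub, key] at h1
    have h2 : (A *ᵥ x) ⬝ᵥ Q *ᵥ (A *ᵥ x) ≤ x ⬝ᵥ Q *ᵥ x - ε * ‖x‖ ^ 2 := by linarith
    have h3 : ε / C * (x ⬝ᵥ Q *ᵥ x) ≤ ε * ‖x‖ ^ 2 := by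
      rw [div_mul_eq_mul_div, div_le_iff₀ hC]
      calc ε * (x ⬝ᵥ Q *ᵥ x) ≤ ε * (C * ‖x‖ ^ 2) :=
            mul_le_mul_of_nonneg_left (hCup x) hε.le
        _ = ε * ‖x‖ ^ 2 * C := by ring
    calc (A *ᵥ x) ⬝ᵥ Q *ᵥ (A *ᵥ x) ≤ (1 - ε / C) * (x ⬝ᵥ Q *ᵥ x) := by nlinarith [qnonneg x]
      _ ≤ ρ * (x ⬝ᵥ Q *ᵥ x) :=
          mul_le_mul_of_nonneg_right (le_max_left _ _) (qnonneg x)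
  -- iterate
  have iter : ∀ (x : Fin n → ℝ) (k : ℕ),
      ((A ^ k) *ᵥ x) ⬝ᵥ Q *ᵥ ((A ^ k) *ᵥ x) ≤ ρ ^ k * (x ⬝ᵥ Q *ᵥ x) := by
    intro x k
    induction k with
    | zero => simp
    | succ k ih =>
      have : A ^ (k + 1) *ᵥ x = A *ᵥ (A ^ k *ᵥ x) := by
        rw [mulVec_mulVec, ← pow_succ']
      rw [this, pow_succ']
      calc (A *ᵥ (A ^ k *ᵥ x)) ⬝ᵥ Q *ᵥ (A *ᵥ (A ^ k *ᵥ x))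
          ≤ ρ * ((A ^ k *ᵥ x) ⬝ᵥ Q *ᵥ (A ^ k *ᵥ x)) := step _
        _ ≤ ρ * (ρ ^ k * (x ⬝ᵥ Q *ᵥ x)) := mul_le_mul_of_nonneg_left ih hρ0
        _ = ρ * ρ ^ k * (x ⬝ᵥ Q *ᵥ x) := by ring
  -- pointwise convergence of A^k x
  have hvec : ∀ x : Fin n → ℝ, Tendsto (fun k => (A ^ k) *ᵥ x) atTop (nhds 0) := by
    intro x
    rw [tendsto_zero_iff_norm_tendsto_zero]
    have hub : ∀ k : ℕ, ‖(A ^ k) *ᵥ x‖ ≤ Real.sqrt (ρ ^ k * (x ⬝ᵥ Q *ᵥ x) / c) := by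
      intro k
      have h1 := hclow ((A ^ k) *ᵥ x)
      have h2 := iter x k
      have h3 : ‖(A ^ k) *ᵥ x‖ ^ 2 ≤ ρ ^ k * (x ⬝ᵥ Q *ᵥ x) / c := by
        rw [le_div_iff₀ hc]
        nlinarith
      calc ‖(A ^ k) *ᵥ x‖ = Real.sqrt (‖(A ^ k) *ᵥ x‖ ^ 2) := by
            rw [Real.sqrt_sq (norm_nonneg _)]
        _ ≤ _ := Real.sqrt_le_sqrt h3
    have hlim : Tendsto (fun k : ℕ => Real.sqrt (ρ ^ k * (x ⬝ᵥ Q *ᵥ x) / c)) atTop (nhds 0) := by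
      have : Tendsto (fun k : ℕ => ρ ^ k * (x ⬝ᵥ Q *ᵥ x) / c) atTop (nhds 0) := by
        have h0 : Tendsto (fun k : ℕ => ρ ^ k) atTop (nhds 0) :=
          tendsto_pow_atTop_nhds_zero_of_lt_one hρ0 hρ1
        simpa using (h0.mul_const (x ⬝ᵥ Q *ᵥ x)).div_const c
      simpa [Real.sqrt_zero, Function.comp_def] using (Real.continuous_sqrt.tendsto 0).comp this
    exact squeeze_zero (fun k => norm_nonneg _) hub hlim
  -- entrywise convergence
  apply tendsto_pi_nhds.mpr
  intro a
  apply tendsto_pi_nhds.mpr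
  intro b
  have hx := hvec (Pi.single b 1)
  have hcomp := (continuous_apply a).tendsto (0 : Fin n → ℝ) |>.comp hx
  have heq : ∀ k : ℕ, ((A ^ k) *ᵥ Pi.single b 1) a = (A ^ k) a b := by
    intro k
    rw [mulVec_single]
    simp
  simpa [heq, Function.comp_def] using hcomp
end

section
/- If the spectral radius of the real n×n matrix M is strictly less than 1, then there exists a symmetric positive definite matrix P such that M^T P M - P is negative definite (a discrete Lyapunov equation solution exists, e.g., P = Σ_{k≥0} (M^T)^k M^k). -/
open Matrix Polynomial

lemma spec_isRoot {n : ℕ} (A : Matrix (Fin n) (Fin n) ℂ) {μ : ℂ}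
    (h : μ ∈ spectrum ℂ A) : A.charpoly.IsRoot μ := by
  rw [spectrum.mem_iff] at h
  have hdet : ((algebraMap ℂ (Matrix (Fin n) (Fin n) ℂ)) μ - A).det = 0 := by
    by_contra hd
    exact h ((Matrix.isUnit_iff_isUnit_det _).mpr (isUnit_iff_ne_zero.mpr hd))
  have : A.charpoly.eval μ = 0 := by
    rw [Matrix.charpoly, eval_det, matPolyEquiv_charmatrix]
    simpa [Matrix.algebraMap_eq_diagonal, Pi.algebraMap_def] using hdet
  exact this

lemma pow_norm_lt {n : ℕ} [NeZero n] (A : Matrix (Fin n) (Fin n) ℂ)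
    (h : ∀ μ ∈ spectrum ℂ A, ‖μ‖₊ < 1) :
    ∃ N : ℕ, 1 ≤ N ∧ ‖(toEuclideanCLM (𝕜 := ℂ) A) ^ N‖ < 1 := by
  set a := toEuclideanCLM (𝕜 := ℂ) A with ha
  have hspec : spectrum ℂ a = spectrum ℂ A :=
    AlgEquiv.spectrum_eq (toEuclideanCLM (𝕜 := ℂ) (n := Fin n)) A
  have hne : (spectrum ℂ a).Nonempty := spectrum.nonempty a
  have hrad : spectralRadius ℂ a < 1 := by
    have := spectrum.spectralRadius_lt_of_forall_lt_of_nonempty hne (r := 1)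
      (fun k hk => h k (hspec ▸ hk))
    simpa using this
  have hG := spectrum.pow_nnnorm_pow_one_div_tendsto_nhds_spectralRadius a
  have hlt : ∀ᶠ N : ℕ in Filter.atTop, (‖a ^ N‖₊ : ENNReal) ^ (1 / (N:ℝ)) < 1 :=
    hG.eventually_lt_const hrad
  obtain ⟨N, hN⟩ := (hlt.and (Filter.eventually_ge_atTop 1)).exists
  refine ⟨N, hN.2, ?_⟩
  by_contra hc
  push_neg at hc
  have h1 : (1 : ENNReal) ≤ (‖a ^ N‖₊ : ENNReal) := by
    rw [show ((1:ENNReal)) = ((1:NNReal) : ENNReal) by norm_num]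
    exact_mod_cast (by exact_mod_cast hc : (1:NNReal) ≤ ‖a ^ N‖₊)
  have hNpos : (0:ℝ) < 1 / (N:ℝ) := by
    have : (0:ℝ) < N := by exact_mod_cast hN.2
    positivity
  have : (1 : ENNReal) ≤ (‖a ^ N‖₊ : ENNReal) ^ (1 / (N:ℝ)) :=
    ENNReal.one_le_rpow h1 hNpos
  exact absurd hN.1 (not_lt.mpr this)

lemma norm_sq_embed {n : ℕ} (v : Fin n → ℝ) :
    ‖(WithLp.equiv 2 (Fin n → ℂ)).symm (fun i => (v i : ℂ))‖ ^ 2 = v ⬝ᵥ v := by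
  rw [EuclideanSpace.norm_eq]
  rw [Real.sq_sqrt (by positivity)]
  simp [dotProduct, sq]

lemma contract {n : ℕ} (B : Matrix (Fin n) (Fin n) ℝ)
    (h : ‖toEuclideanCLM (𝕜 := ℂ) (B.map (algebraMap ℝ ℂ))‖ < 1)
    (x : Fin n → ℝ) (hx : x ≠ 0) :
    (B *ᵥ x) ⬝ᵥ (B *ᵥ x) < x ⬝ᵥ x := by
  set b := toEuclideanCLM (𝕜 := ℂ) (B.map (algebraMap ℝ ℂ)) with hb
  set y : EuclideanSpace ℂ (Fin n) :=
    (WithLp.equiv 2 (Fin n → ℂ)).symm (fun i => (x i : ℂ)) with hy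
  have hby : b y = (WithLp.equiv 2 (Fin n → ℂ)).symm (fun i => (((B *ᵥ x) i : ℝ) : ℂ)) := by
    rw [hy, hb, WithLp.equiv_symm_apply, toEuclideanCLM_toLp]
    congr 1
    funext i
    exact ((algebraMap ℝ ℂ).map_mulVec B x i).symm
  have hnn : (0:ℝ) ≤ x ⬝ᵥ x := Finset.sum_nonneg fun i _ => mul_self_nonneg (x i)
  have hxx : (0:ℝ) < x ⬝ᵥ x :=
    lt_of_le_of_ne hnn (fun h' => hx (dotProduct_self_eq_zero.mp h'.symm))
  have hyn : ‖y‖ ^ 2 = x ⬝ᵥ x := norm_sq_embed x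
  have hypos : 0 < ‖y‖ := by
    by_contra hc
    push_neg at hc
    have : ‖y‖ = 0 := le_antisymm hc (norm_nonneg _)
    rw [this] at hyn; simp at hyn; rw [← hyn] at hxx; simp at hxx
  have hlt : ‖b y‖ < ‖y‖ := by
    calc ‖b y‖ ≤ ‖b‖ * ‖y‖ := b.le_opNorm y
    _ < 1 * ‖y‖ := by exact mul_lt_mul_of_pos_right h hypos
    _ = ‖y‖ := one_mul _
  have := mul_self_lt_mul_self (norm_nonneg (b y)) hlt
  rw [← sq, ← sq, hyn, hby, norm_sq_embed] at this
  exact this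

lemma sum_mulVec' {n : ℕ} {s : Finset ℕ} (A : ℕ → Matrix (Fin n) (Fin n) ℝ) (v : Fin n → ℝ) :
    (∑ k ∈ s, A k) *ᵥ v = ∑ k ∈ s, (A k) *ᵥ v := by
  ext i
  simp only [Matrix.mulVec, dotProduct, Finset.sum_apply, Matrix.sum_apply,
    Finset.sum_mul]
  rw [Finset.sum_comm]

lemma dot_sum' {n : ℕ} {s : Finset ℕ} (v : Fin n → ℝ) (w : ℕ → (Fin n → ℝ)) :
    v ⬝ᵥ (∑ k ∈ s, w k) = ∑ k ∈ s, v ⬝ᵥ w k := by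
  simp only [dotProduct, Finset.sum_apply, Finset.mul_sum]
  rw [Finset.sum_comm]

lemma quad_form_transpose_mul {n : ℕ} (B : Matrix (Fin n) (Fin n) ℝ) (v : Fin n → ℝ) :
    v ⬝ᵥ (Bᵀ * B) *ᵥ v = (B *ᵥ v) ⬝ᵥ (B *ᵥ v) := by
  rw [← Matrix.mulVec_mulVec, Matrix.dotProduct_mulVec, Matrix.vecMul_transpose]

theorem spectral_radius_lt_one_lyapunov_exists
    {n : ℕ} (M : Matrix (Fin n) (Fin n) ℝ)
    (hspec : ∀ μ : ℂ, (M.map (algebraMap ℝ ℂ)).charpoly.IsRoot μ → ‖μ‖ < 1) :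
    ∃ P : Matrix (Fin n) (Fin n) ℝ, P.PosDef ∧
      ∀ x : Fin n → ℝ, x ≠ 0 → x ⬝ᵥ (Mᵀ * P * M - P) *ᵥ x < 0 := by
  rcases Nat.eq_zero_or_pos n with hn | hn
  · subst hn
    refine ⟨1, ⟨Matrix.isHermitian_one, fun x hx => ?_⟩, fun x hx => ?_⟩ <;>
      exact absurd (Subsingleton.elim x 0) hx
  haveI : NeZero n := ⟨hn.ne'⟩
  set A := M.map (algebraMap ℝ ℂ) with hA
  have hs : ∀ μ ∈ spectrum ℂ A, ‖μ‖₊ < 1 := by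
    intro μ hμ
    have h1 := hspec μ (spec_isRoot A hμ)
    rw [← NNReal.coe_lt_coe]
    simpa using h1
  obtain ⟨N, hN1, hN⟩ := pow_norm_lt A hs
  have hpow : (toEuclideanCLM (𝕜 := ℂ) A) ^ N
      = toEuclideanCLM (𝕜 := ℂ) ((M ^ N).map (algebraMap ℝ ℂ)) := by
    rw [← map_pow]
    congr 1
    rw [hA, ← RingHom.mapMatrix_apply, ← RingHom.mapMatrix_apply, map_pow]
  rw [hpow] at hN
  have key := contract (M ^ N) hN
  set P : Matrix (Fin n) (Fin n) ℝ := ∑ k ∈ Finset.range N, ((M ^ k)ᵀ * M ^ k) with hP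
  have hquad : ∀ v : Fin n → ℝ,
      v ⬝ᵥ P *ᵥ v = ∑ k ∈ Finset.range N, (M ^ k *ᵥ v) ⬝ᵥ (M ^ k *ᵥ v) := by
    intro v
    rw [hP, sum_mulVec' (fun k => (M ^ k)ᵀ * M ^ k) v, dot_sum']
    exact Finset.sum_congr rfl fun k _ => quad_form_transpose_mul (M ^ k) v
  have fnn : ∀ (v : Fin n → ℝ), (0:ℝ) ≤ v ⬝ᵥ v :=
    fun v => Finset.sum_nonneg fun i _ => mul_self_nonneg (v i)
  refine ⟨P, Matrix.posDef_iff_dotProduct_mulVec.mpr ⟨?_, ?_⟩, ?_⟩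
  · rw [Matrix.IsHermitian, Matrix.conjTranspose_eq_transpose_of_trivial, hP,
      Matrix.transpose_sum]
    refine Finset.sum_congr rfl fun k _ => ?_
    rw [Matrix.transpose_mul, Matrix.transpose_transpose]
  · intro x hx
    rw [star_trivial, hquad x]
    have hpos : (0:ℝ) < (M ^ 0 *ᵥ x) ⬝ᵥ (M ^ 0 *ᵥ x) := by
      simp only [pow_zero, Matrix.one_mulVec]
      exact lt_of_le_of_ne (fnn x)
        (fun h' => hx (dotProduct_self_eq_zero.mp h'.symm))
    exact lt_of_lt_of_le hpos
      (Finset.single_le_sum (f := fun k => (M ^ k *ᵥ x) ⬝ᵥ (M ^ k *ᵥ x))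
        (fun k _ => fnn _) (Finset.mem_range.mpr hN1))
  · intro x hx
    have e1 : x ⬝ᵥ (Mᵀ * P * M - P) *ᵥ x
        = (M *ᵥ x) ⬝ᵥ P *ᵥ (M *ᵥ x) - x ⬝ᵥ P *ᵥ x := by
      rw [Matrix.sub_mulVec, dotProduct_sub]
      congr 1
      rw [← Matrix.mulVec_mulVec, ← Matrix.mulVec_mulVec, Matrix.dotProduct_mulVec,
        Matrix.vecMul_transpose]
    rw [e1, hquad, hquad]
    have e2 : ∀ k : ℕ, (M ^ k *ᵥ (M *ᵥ x)) ⬝ᵥ (M ^ k *ᵥ (M *ᵥ x))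
        = (M ^ (k+1) *ᵥ x) ⬝ᵥ (M ^ (k+1) *ᵥ x) := by
      intro k
      rw [Matrix.mulVec_mulVec, ← pow_succ]
    calc ∑ k ∈ Finset.range N, (M ^ k *ᵥ (M *ᵥ x)) ⬝ᵥ (M ^ k *ᵥ (M *ᵥ x))
          - ∑ k ∈ Finset.range N, (M ^ k *ᵥ x) ⬝ᵥ (M ^ k *ᵥ x)
        = ∑ k ∈ Finset.range N, ((M ^ (k+1) *ᵥ x) ⬝ᵥ (M ^ (k+1) *ᵥ x)
            - (M ^ k *ᵥ x) ⬝ᵥ (M ^ k *ᵥ x)) := by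
          rw [Finset.sum_sub_distrib]
          congr 1
          exact Finset.sum_congr rfl fun k _ => e2 k
      _ = (M ^ N *ᵥ x) ⬝ᵥ (M ^ N *ᵥ x) - (M ^ 0 *ᵥ x) ⬝ᵥ (M ^ 0 *ᵥ x) :=
          Finset.sum_range_sub (fun k => (M ^ k *ᵥ x) ⬝ᵥ (M ^ k *ᵥ x)) N
      _ < 0 := by
          simp only [pow_zero, Matrix.one_mulVec]
          exact sub_neg.mpr (key x hx)
end
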